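/- Lindeberg swapping step for quadratic forms: With the notation and assumptions of the universality theorem, fix k and define W_{k,0} as the part of the quadratic form not involving the k-th coordinate, W_k = W_{k,0} + Σ_{i<k} w_{i,k}(ηᵢ,ξ_k) + Σ_{j>k} w_{k,j}(ξ_k,ξⱼ) and W_{k+1} = W_{k,0} + Σ_{i<k} w_{i,k}(ηᵢ,η_k) + Σ_{j>k} w_{k,j}(η_k,ξⱼ). Then the first and second conditional moments of W_k − W_{k,0} and W_{k+1} − W_{k,0} given all variables except the k-th coincide, and hence for f ∈ C³_b, |E f(W_k) − E f(W_{k+1})| ≤ (sup|f^{(3)}|/6)(E|W_k − W_{k,0}|³ + E|W_{k+1} − W_{k,0}|³). -/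

import Mathlib

open Finset MeasureTheory ProbabilityTheory

variable {Ω : Type*} [MeasurableSpace Ω] {𝒳 : Type*} [MeasurableSpace 𝒳]

/-- The family obtained by using `η i` for `i < k` and `ξ i` otherwise. -/
def lowerMix {n : ℕ} (ξ η : Fin n → Ω → 𝒳) (k : Fin n) : Fin n → Ω → 𝒳 :=
  fun i => if i < k then η i else ξ i

/-- `W_{k,0}`: the part of the quadratic form not involving the `k`-th coordinate, with
`η`'s in coordinates `< k` and `ξ`'s in coordinates `> k`. -/
def Wk0 {n : ℕ} (w : Fin n → Fin n → 𝒳 → 𝒳 → ℝ) (ξ η : Fin n → Ω → 𝒳) (k : Fin n)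
    (ω : Ω) : ℝ :=
  ∑ i : Fin n, ∑ j ∈ Finset.Ioi i,
    if i ≠ k ∧ j ≠ k then w i j (lowerMix ξ η k i ω) (lowerMix ξ η k j ω) else 0

/-- The increment `W_k − W_{k,0} = Σ_{i<k} w_{i,k}(ηᵢ,ξ_k) + Σ_{j>k} w_{k,j}(ξ_k,ξⱼ)`. -/
def incrXi {n : ℕ} (w : Fin n → Fin n → 𝒳 → 𝒳 → ℝ) (ξ η : Fin n → Ω → 𝒳) (k : Fin n)
    (ω : Ω) : ℝ :=
  ∑ i ∈ Finset.Iio k, w i k (η i ω) (ξ k ω) + ∑ j ∈ Finset.Ioi k, w k j (ξ k ω) (ξ j ω)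

/-- The increment `W_{k+1} − W_{k,0} = Σ_{i<k} w_{i,k}(ηᵢ,η_k) + Σ_{j>k} w_{k,j}(η_k,ξⱼ)`. -/
def incrEta {n : ℕ} (w : Fin n → Fin n → 𝒳 → 𝒳 → ℝ) (ξ η : Fin n → Ω → 𝒳) (k : Fin n)
    (ω : Ω) : ℝ :=
  ∑ i ∈ Finset.Iio k, w i k (η i ω) (η k ω) + ∑ j ∈ Finset.Ioi k, w k j (η k ω) (ξ j ω)

/-- The σ-algebra generated by all coordinates except the `k`-th one. -/
def exceptSigma {n : ℕ} (ξ η : Fin n → Ω → 𝒳) (k : Fin n) : MeasurableSpace Ω :=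
  MeasurableSpace.comap
    (fun ω => (fun i : {i : Fin n // i ≠ k} => lowerMix ξ η k (i : Fin n) ω))
    MeasurableSpace.pi


section TaylorSec
open Set

lemma iteratedDerivWithin_eq_iteratedDeriv' {f : ℝ → ℝ} {N : ℕ} (hf : ContDiff ℝ (N : ℕ∞) f)
    {s : Set ℝ} (hs : UniqueDiffOn ℝ s) {x : ℝ} (hx : x ∈ s) {m : ℕ} (hm : m ≤ N) :
    iteratedDerivWithin m f s x = iteratedDeriv m f x := by
  have h := ((contDiff_iff_ftaylorSeries.mp hf).hasFTaylorSeriesUpToOn s).eq_iteratedFDerivWithin_of_uniqueDiffOn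
    (mod_cast hm) hs hx
  rw [iteratedDerivWithin_eq_iteratedFDerivWithin, iteratedDeriv_eq_iteratedFDeriv, ← h]
  rfl

lemma taylor3_nonneg {f : ℝ → ℝ} (hf : ContDiff ℝ 3 f) {M : ℝ}
    (hM : ∀ x, |iteratedDeriv 3 f x| ≤ M) (s u : ℝ) (hu : 0 ≤ u) :
    |f (s + u) - f s - iteratedDeriv 1 f s * u - iteratedDeriv 2 f s * u ^ 2 / 2|
      ≤ M * |u| ^ 3 / 6 := by
  rcases eq_or_lt_of_le hu with rfl | hu'
  · simpa using div_nonneg (mul_nonneg (le_trans (abs_nonneg _) (hM 0)) (abs_nonneg _)) (by norm_num : (0:ℝ) ≤ 6)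
  · have hx : s < s + u := by linarith
    have hf3 : ContDiff ℝ (3 : ℕ) f := by exact_mod_cast hf
    have hud : UniqueDiffOn ℝ (Icc s (s + u)) := uniqueDiffOn_Icc hx
    have hfO : ContDiffOn ℝ 2 f (Icc s (s + u)) := (hf.of_le (by norm_num)).contDiffOn
    have hderiv2 : ContDiff ℝ 1 (iteratedDeriv 2 f) := by
      rw [iteratedDeriv_eq_iterate]
      exact ContDiff.iterate_deriv' 1 2 (by exact_mod_cast hf)
    have hf' : DifferentiableOn ℝ (iteratedDerivWithin 2 f (Icc s (s + u))) (Ioo s (s + u)) := by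
      apply DifferentiableOn.congr (f := iteratedDeriv 2 f)
      · exact (hderiv2.differentiable (by norm_num)).differentiableOn
      · intro y hy
        exact iteratedDerivWithin_eq_iteratedDeriv' hf3 hud (Ioo_subset_Icc_self hy) (by norm_num)
    obtain ⟨x', hx', hE⟩ := taylor_mean_remainder_lagrange (n := 2) hx.ne
      (by rwa [uIcc_of_le hx.le]) (by rwa [uIcc_of_le hx.le, uIoo_of_le hx.le])
    rw [uIoo_of_le hx.le] at hx'
    rw [uIcc_of_le hx.le] at hE
    have hT : taylorWithinEval f 2 (Icc s (s + u)) s (s + u)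
        = f s + iteratedDeriv 1 f s * u + iteratedDeriv 2 f s * u ^ 2 / 2 := by
      rw [taylor_within_apply]
      rw [Finset.sum_range_succ, Finset.sum_range_succ, Finset.sum_range_one]
      rw [iteratedDerivWithin_eq_iteratedDeriv' hf3 hud (left_mem_Icc.2 hx.le) (by norm_num),
        iteratedDerivWithin_eq_iteratedDeriv' hf3 hud (left_mem_Icc.2 hx.le) (by norm_num),
        iteratedDerivWithin_eq_iteratedDeriv' hf3 hud (left_mem_Icc.2 hx.le) (by norm_num)]
      simp [iteratedDeriv_zero]
      ring
    have h3 : iteratedDerivWithin 3 f (Icc s (s + u)) x'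
        = iteratedDeriv 3 f x' :=
      iteratedDerivWithin_eq_iteratedDeriv' hf3 hud (Ioo_subset_Icc_self hx') le_rfl
    have heq : f (s + u) - f s - iteratedDeriv 1 f s * u - iteratedDeriv 2 f s * u ^ 2 / 2
        = iteratedDeriv 3 f x' * u ^ 3 / 6 := by
      rw [hT] at hE
      have h6 : (((2 + 1).factorial : ℕ) : ℝ) = 6 := by norm_num [Nat.factorial]
      rw [show (2 + 1) = 3 from rfl] at hE
      rw [h3, h6, add_sub_cancel_left] at hE
      linarith [hE]
    rw [heq, abs_div, abs_mul, abs_pow, show |(6:ℝ)| = 6 by norm_num]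
    gcongr
    exact hM x'

lemma taylor3 {f : ℝ → ℝ} (hf : ContDiff ℝ 3 f) {M : ℝ}
    (hM : ∀ x, |iteratedDeriv 3 f x| ≤ M) (s u : ℝ) :
    |f (s + u) - f s - iteratedDeriv 1 f s * u - iteratedDeriv 2 f s * u ^ 2 / 2|
      ≤ M * |u| ^ 3 / 6 := by
  rcases le_or_gt 0 u with hu | hu
  · exact taylor3_nonneg hf hM s u hu
  · set g : ℝ → ℝ := fun x => f (-x) with hg
    have hgc : ContDiff ℝ 3 g := hf.comp (contDiff_neg)
    have hgM : ∀ x, |iteratedDeriv 3 g x| ≤ M := by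
      intro x
      rw [hg]
      rw [iteratedDeriv_comp_neg]
      simp only [smul_eq_mul]
      rw [abs_mul]
      simp [abs_pow]
      exact hM (-x)
    have key := taylor3_nonneg hgc hgM (-s) (-u) (by linarith)
    have h1 : iteratedDeriv 1 g (-s) = -iteratedDeriv 1 f s := by
      rw [hg, iteratedDeriv_comp_neg]; simp
    have h2 : iteratedDeriv 2 g (-s) = iteratedDeriv 2 f s := by
      rw [hg, iteratedDeriv_comp_neg]; simp
    rw [h1, h2] at key
    have e1 : g (-s + -u) = f (s + u) := by rw [hg]; ring_nf
    have e2 : g (-s) = f s := by rw [hg]; ring_nf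
    rw [e1, e2] at key
    have : -iteratedDeriv 1 f s * -u = iteratedDeriv 1 f s * u := by ring
    rw [this] at key
    have : (-u) ^ 2 = u ^ 2 := by ring
    rw [this] at key
    simpa [abs_neg] using key

end TaylorSec



private lemma abs_pow4 (a : ℝ) : |a| ^ 4 = a ^ 4 := by
  rw [← abs_pow]; exact abs_of_nonneg (by positivity)

lemma abs_le_one_add_pow4 (a : ℝ) : |a| ≤ 1 + a ^ 4 := by
  rcases le_total |a| 1 with h | h
  · have : (0:ℝ) ≤ a ^ 4 := by positivity
    linarith
  · calc |a| ≤ |a| ^ 4 := le_self_pow₀ h (by norm_num)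
    _ = a ^ 4 := abs_pow4 a
    _ ≤ 1 + a ^ 4 := by linarith

lemma sq_le_one_add_pow4 (a : ℝ) : a ^ 2 ≤ 1 + a ^ 4 := by
  nlinarith [sq_nonneg (a ^ 2 - 1), sq_nonneg a]

lemma abs_cube_le_one_add_pow4 (a : ℝ) : |a| ^ 3 ≤ 1 + a ^ 4 := by
  rcases le_total |a| 1 with h | h
  · have h1 : |a| ^ 3 ≤ 1 := pow_le_one₀ (abs_nonneg a) h
    have : (0:ℝ) ≤ a ^ 4 := by positivity
    linarith
  · calc |a| ^ 3 ≤ |a| ^ 4 := pow_le_pow_right₀ h (by norm_num)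
    _ = a ^ 4 := abs_pow4 a
    _ ≤ 1 + a ^ 4 := by linarith

lemma abs_mul_le_one_add_pow4 (a b : ℝ) : |a * b| ≤ 1 + a ^ 4 + b ^ 4 := by
  have h1 : |a * b| ≤ (a ^ 2 + b ^ 2) / 2 := by
    rw [abs_mul]
    nlinarith [sq_nonneg (|a| - |b|), sq_abs a, sq_abs b, abs_nonneg a, abs_nonneg b]
  have h2 := sq_le_one_add_pow4 a
  have h3 := sq_le_one_add_pow4 b
  have h4 : (0:ℝ) ≤ a ^ 4 := by positivity
  have h5 : (0:ℝ) ≤ b ^ 4 := by positivity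
  linarith

lemma pow4_sum_le {ι : Type*} (s : Finset ι) (g : ι → ℝ) :
    (∑ i ∈ s, g i) ^ 4 ≤ (s.card : ℝ) ^ 3 * ∑ i ∈ s, (g i) ^ 4 := by
  have h1 : (∑ i ∈ s, g i) ^ 4 ≤ (∑ i ∈ s, |g i|) ^ 4 := by
    rw [← abs_pow4 (∑ i ∈ s, g i)]
    exact pow_le_pow_left₀ (abs_nonneg _) (Finset.abs_sum_le_sum_abs g s) 4
  have h2 := pow_sum_le_card_mul_sum_pow (s := s) (f := fun i => |g i|)
    (fun i _ => abs_nonneg _) 3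
  calc (∑ i ∈ s, g i) ^ 4 ≤ (∑ i ∈ s, |g i|) ^ 4 := h1
  _ ≤ (s.card : ℝ) ^ 3 * ∑ i ∈ s, |g i| ^ 4 := h2
  _ = (s.card : ℝ) ^ 3 * ∑ i ∈ s, (g i) ^ 4 := by
      congr 1; exact Finset.sum_congr rfl fun i _ => abs_pow4 (g i)

section Pow4Integrable

variable {α : Type*} [MeasurableSpace α] {ν : Measure α} [IsFiniteMeasure ν]

lemma integrable_self_of_pow4 {t : α → ℝ} (ht : AEStronglyMeasurable t ν)
    (h4 : Integrable (fun a => t a ^ 4) ν) : Integrable t ν := by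
  refine Integrable.mono' ((integrable_const 1).add h4) ht
    (Filter.Eventually.of_forall fun a => ?_)
  simpa [Real.norm_eq_abs] using abs_le_one_add_pow4 (t a)

lemma integrable_sq_of_pow4 {t : α → ℝ} (ht : AEStronglyMeasurable t ν)
    (h4 : Integrable (fun a => t a ^ 4) ν) : Integrable (fun a => t a ^ 2) ν := by
  refine Integrable.mono' ((integrable_const 1).add h4) (ht.pow 2)
    (Filter.Eventually.of_forall fun a => ?_)
  rw [Real.norm_eq_abs, abs_of_nonneg (by positivity : (0:ℝ) ≤ t a ^ 2)]
  exact sq_le_one_add_pow4 (t a)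

lemma integrable_abs_cube_of_pow4 {t : α → ℝ} (ht : AEStronglyMeasurable t ν)
    (h4 : Integrable (fun a => t a ^ 4) ν) : Integrable (fun a => |t a| ^ 3) ν := by
  have hsm : AEStronglyMeasurable (fun a => |t a| ^ 3) ν := by
    exact ht.norm.pow 3
  refine Integrable.mono' ((integrable_const 1).add h4) hsm
    (Filter.Eventually.of_forall fun a => ?_)
  rw [Real.norm_eq_abs, abs_of_nonneg (by positivity : (0:ℝ) ≤ |t a| ^ 3)]
  exact abs_cube_le_one_add_pow4 (t a)

lemma integrable_mul_of_pow4 {t t' : α → ℝ} (ht : AEStronglyMeasurable t ν)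
    (ht' : AEStronglyMeasurable t' ν)
    (h4 : Integrable (fun a => t a ^ 4) ν) (h4' : Integrable (fun a => t' a ^ 4) ν) :
    Integrable (fun a => t a * t' a) ν := by
  refine Integrable.mono' (((integrable_const 1).add h4).add h4') (ht.mul ht')
    (Filter.Eventually.of_forall fun a => ?_)
  have := abs_mul_le_one_add_pow4 (t a) (t' a)
  rw [abs_mul] at this
  simpa [Real.norm_eq_abs, add_assoc] using this

end Pow4Integrable

section PairHelpers

variable {Ω' 𝒳' β : Type*} [MeasurableSpace Ω'] [MeasurableSpace 𝒳'] [MeasurableSpace β]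
variable {μ : Measure Ω'} [IsProbabilityMeasure μ] {X : Ω' → 𝒳'} {R : Ω' → β}

lemma pair_map_eq (hX : Measurable X) (hR : Measurable R) (hXR : IndepFun X R μ) :
    μ.map (fun ω => (X ω, R ω)) = (μ.map X).prod (μ.map R) :=
  (indepFun_iff_map_prod_eq_prod_map_map hX.aemeasurable hR.aemeasurable).mp hXR

lemma integrable_pair_iff (hX : Measurable X) (hR : Measurable R) (hXR : IndepFun X R μ)
    {H : 𝒳' × β → ℝ} (hH : StronglyMeasurable H) :
    Integrable H ((μ.map X).prod (μ.map R)) ↔ Integrable (fun ω => H (X ω, R ω)) μ := by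
  rw [← pair_map_eq hX hR hXR]
  exact integrable_map_measure hH.aestronglyMeasurable (hX.prodMk hR).aemeasurable

lemma integral_pair_eq (hX : Measurable X) (hR : Measurable R) (hXR : IndepFun X R μ)
    {H : 𝒳' × β → ℝ} (hH : StronglyMeasurable H)
    (hint : Integrable (fun ω => H (X ω, R ω)) μ) :
    ∫ ω, H (X ω, R ω) ∂μ = ∫ b, ∫ x, H (x, b) ∂(μ.map X) ∂(μ.map R) := by
  haveI : IsProbabilityMeasure (μ.map X) := Measure.isProbabilityMeasure_map hX.aemeasurable
  haveI : IsProbabilityMeasure (μ.map R) := Measure.isProbabilityMeasure_map hR.aemeasurable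
  have hIP : Integrable H ((μ.map X).prod (μ.map R)) :=
    (integrable_pair_iff hX hR hXR hH).mpr hint
  calc ∫ ω, H (X ω, R ω) ∂μ
      = ∫ p, H p ∂((μ.map X).prod (μ.map R)) := by
        rw [← pair_map_eq hX hR hXR,
          integral_map (hX.prodMk hR).aemeasurable
            (by rw [pair_map_eq hX hR hXR]; exact hH.aestronglyMeasurable)]
  _ = ∫ x, ∫ b, H (x, b) ∂(μ.map R) ∂(μ.map X) := integral_prod _ hIP
  _ = ∫ b, ∫ x, H (x, b) ∂(μ.map X) ∂(μ.map R) :=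
      integral_integral_swap (f := fun x b => H (x, b)) (by exact hIP)

lemma setIntegral_pair_eq (hX : Measurable X) (hR : Measurable R) (hXR : IndepFun X R μ)
    {H : 𝒳' × β → ℝ} (hH : StronglyMeasurable H)
    (hint : Integrable (fun ω => H (X ω, R ω)) μ) {A : Set β} (hA : MeasurableSet A) :
    ∫ ω in R ⁻¹' A, H (X ω, R ω) ∂μ = ∫ b in A, ∫ x, H (x, b) ∂(μ.map X) ∂(μ.map R) := by
  haveI : IsProbabilityMeasure (μ.map X) := Measure.isProbabilityMeasure_map hX.aemeasurable
  haveI : IsProbabilityMeasure (μ.map R) := Measure.isProbabilityMeasure_map hR.aemeasurable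
  have hIP : Integrable H ((μ.map X).prod (μ.map R)) :=
    (integrable_pair_iff hX hR hXR hH).mpr hint
  have h1 : R ⁻¹' A = (fun ω => (X ω, R ω)) ⁻¹' (Set.univ ×ˢ A) := by
    ext ω; simp
  have hres : ((μ.map X).prod (μ.map R)).restrict (Set.univ ×ˢ A)
      = (μ.map X).prod ((μ.map R).restrict A) := by
    rw [← Measure.prod_restrict, Measure.restrict_univ]
  have hIP' : Integrable H ((μ.map X).prod ((μ.map R).restrict A)) := by
    rw [← hres]
    exact hIP.restrict
  calc ∫ ω in R ⁻¹' A, H (X ω, R ω) ∂μ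
      = ∫ p in Set.univ ×ˢ A, H p ∂((μ.map X).prod (μ.map R)) := by
        rw [h1, ← setIntegral_map (MeasurableSet.univ.prod hA)
          (by rw [pair_map_eq hX hR hXR]; exact hH.aestronglyMeasurable)
          (hX.prodMk hR).aemeasurable, pair_map_eq hX hR hXR]
  _ = ∫ p, H p ∂((μ.map X).prod ((μ.map R).restrict A)) := by
        rw [← hres]
  _ = ∫ x, ∫ b, H (x, b) ∂((μ.map R).restrict A) ∂(μ.map X) := integral_prod _ hIP'
  _ = ∫ b, ∫ x, H (x, b) ∂(μ.map X) ∂((μ.map R).restrict A) :=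
      integral_integral_swap (f := fun x b => H (x, b)) (by exact hIP')
  _ = ∫ b in A, ∫ x, H (x, b) ∂(μ.map X) ∂(μ.map R) := rfl

lemma condexp_pair [TopologicalSpace 𝒳'] [TopologicalSpace β]
    (hX : Measurable X) (hR : Measurable R) (hXR : IndepFun X R μ)
    {H : 𝒳' × β → ℝ} (hH : StronglyMeasurable H)
    (hint : Integrable (fun ω => H (X ω, R ω)) μ) :
    μ[(fun ω => H (X ω, R ω)) | MeasurableSpace.comap R ‹MeasurableSpace β›] =ᵐ[μ]
      fun ω => ∫ x, H (x, R ω) ∂(μ.map X) := by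
  haveI : IsProbabilityMeasure (μ.map X) := Measure.isProbabilityMeasure_map hX.aemeasurable
  haveI : IsProbabilityMeasure (μ.map R) := Measure.isProbabilityMeasure_map hR.aemeasurable
  have hm : MeasurableSpace.comap R ‹MeasurableSpace β› ≤ ‹MeasurableSpace Ω'› :=
    measurable_iff_comap_le.mp hR
  have hIP : Integrable H ((μ.map X).prod (μ.map R)) :=
    (integrable_pair_iff hX hR hXR hH).mpr hint
  set G : β → ℝ := fun b => ∫ x, H (x, b) ∂(μ.map X) with hG
  have hGsm : StronglyMeasurable G := hH.integral_prod_left'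
  have hGint : Integrable G (μ.map R) := hIP.integral_prod_right
  have hGRint : Integrable (fun ω => G (R ω)) μ :=
    (integrable_map_measure hGsm.aestronglyMeasurable hR.aemeasurable).mp hGint
  refine (ae_eq_condExp_of_forall_setIntegral_eq hm hint
    (fun s _ _ => hGRint.integrableOn) ?_ ?_).symm
  · rintro s ⟨A, hA, rfl⟩ _
    have e1 : ∫ ω in R ⁻¹' A, G (R ω) ∂μ = ∫ b in A, G b ∂(μ.map R) :=
      (setIntegral_map hA hGsm.aestronglyMeasurable hR.aemeasurable).symm
    rw [e1, setIntegral_pair_eq hX hR hXR hH hint hA]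
  · exact StronglyMeasurable.aestronglyMeasurable
      ((hGsm.measurable.comp (comap_measurable R)).stronglyMeasurable)

end PairHelpers



section Defs

/-- All coordinates except the `k`-th, as one map. -/
def exceptMap {n : ℕ} (ξ η : Fin n → Ω → 𝒳) (k : Fin n) :
    Ω → ({i : Fin n // i ≠ k} → 𝒳) :=
  fun ω => fun i : {i : Fin n // i ≠ k} => lowerMix ξ η k (i : Fin n) ω

/-- The increment as a function of the `k`-th coordinate and the others. -/
def Fq {n : ℕ} (w : Fin n → Fin n → 𝒳 → 𝒳 → ℝ) (k : Fin n)
    (x : 𝒳) (b : {i : Fin n // i ≠ k} → 𝒳) : ℝ :=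
  (∑ i ∈ (Finset.Iio k).attach, w i.1 k (b ⟨i.1, (Finset.mem_Iio.mp i.2).ne⟩) x) +
  ∑ j ∈ (Finset.Ioi k).attach, w k j.1 x (b ⟨j.1, (Finset.mem_Ioi.mp j.2).ne'⟩)

/-- The base quadratic form as a function of the non-`k` coordinates. -/
def s0q {n : ℕ} (w : Fin n → Fin n → 𝒳 → 𝒳 → ℝ) (k : Fin n)
    (b : {i : Fin n // i ≠ k} → 𝒳) : ℝ :=
  ∑ i : Fin n, ∑ j ∈ Finset.Ioi i,
    if h : i ≠ k ∧ j ≠ k then w i j (b ⟨i, h.1⟩) (b ⟨j, h.2⟩) else 0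

/-- The conditional second moment of the increment. -/
noncomputable def SGq {n : ℕ} (μ : Measure Ω) (w : Fin n → Fin n → 𝒳 → 𝒳 → ℝ) (k : Fin n)
    (Z : Ω → 𝒳) (b : {i : Fin n // i ≠ k} → 𝒳) : ℝ :=
  (∑ i ∈ (Finset.Iio k).attach, ∑ i' ∈ (Finset.Iio k).attach,
    ∫ ω, w i.1 k (b ⟨i.1, (Finset.mem_Iio.mp i.2).ne⟩) (Z ω) *
      w i'.1 k (b ⟨i'.1, (Finset.mem_Iio.mp i'.2).ne⟩) (Z ω) ∂μ) +
  2 * (∑ i ∈ (Finset.Iio k).attach, ∑ j ∈ (Finset.Ioi k).attach,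
    ∫ ω, w i.1 k (b ⟨i.1, (Finset.mem_Iio.mp i.2).ne⟩) (Z ω) *
      w k j.1 (Z ω) (b ⟨j.1, (Finset.mem_Ioi.mp j.2).ne'⟩) ∂μ) +
  ∑ j ∈ (Finset.Ioi k).attach, ∑ j' ∈ (Finset.Ioi k).attach,
    ∫ ω, w k j.1 (Z ω) (b ⟨j.1, (Finset.mem_Ioi.mp j.2).ne'⟩) *
      w k j'.1 (Z ω) (b ⟨j'.1, (Finset.mem_Ioi.mp j'.2).ne'⟩) ∂μ

lemma Fq_measurable {n : ℕ} (w : Fin n → Fin n → 𝒳 → 𝒳 → ℝ) (k : Fin n)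
    (hw_meas : ∀ i j, Measurable (fun q : 𝒳 × 𝒳 => w i j q.1 q.2)) :
    Measurable (fun p : 𝒳 × ({i : Fin n // i ≠ k} → 𝒳) => Fq w k p.1 p.2) := by
  apply Measurable.add
  · apply Finset.measurable_sum
    intro i _
    have hg : Measurable (fun p : 𝒳 × ({i : Fin n // i ≠ k} → 𝒳) =>
        (p.2 ⟨i.1, (Finset.mem_Iio.mp i.2).ne⟩, p.1)) :=
      Measurable.prodMk (Measurable.comp (measurable_pi_apply _) measurable_snd) measurable_fst
    exact (hw_meas i.1 k).comp hg
  · apply Finset.measurable_sum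
    intro j _
    have hg : Measurable (fun p : 𝒳 × ({i : Fin n // i ≠ k} → 𝒳) =>
        (p.1, p.2 ⟨j.1, (Finset.mem_Ioi.mp j.2).ne'⟩)) :=
      Measurable.prodMk measurable_fst (Measurable.comp (measurable_pi_apply _) measurable_snd)
    exact (hw_meas k j.1).comp hg

lemma s0q_measurable {n : ℕ} (w : Fin n → Fin n → 𝒳 → 𝒳 → ℝ) (k : Fin n)
    (hw_meas : ∀ i j, Measurable (fun q : 𝒳 × 𝒳 => w i j q.1 q.2)) :
    Measurable (s0q w k) := by
  apply Finset.measurable_sum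
  intro i _
  apply Finset.measurable_sum
  intro j _
  by_cases h : i ≠ k ∧ j ≠ k
  · simp only [dif_pos h]
    have hg : Measurable (fun b : {i : Fin n // i ≠ k} → 𝒳 => (b ⟨i, h.1⟩, b ⟨j, h.2⟩)) :=
      Measurable.prodMk (measurable_pi_apply _) (measurable_pi_apply _)
    exact (hw_meas i j).comp hg
  · simp only [dif_neg h]
    exact measurable_const

end Defs
lemma add_pow4_le (a b : ℝ) : (a + b) ^ 4 ≤ 8 * (a ^ 4 + b ^ 4) := by
  nlinarith [sq_nonneg (a - b), sq_nonneg (a + b), sq_nonneg (a ^ 2 - b ^ 2),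
    sq_nonneg (a * b), sq_nonneg a, sq_nonneg b, sq_nonneg (a ^ 2 + b ^ 2 - 2 * a * b)]

section Side

variable [TopologicalSpace 𝒳]

set_option maxHeartbeats 2000000 in
lemma sideAnalysis
    (μ : Measure Ω) [IsProbabilityMeasure μ] {n : ℕ}
    (ξ η : Fin n → Ω → 𝒳) (k : Fin n)
    (w : Fin n → Fin n → 𝒳 → 𝒳 → ℝ)
    (hw_meas : ∀ i j, Measurable (fun q : 𝒳 × 𝒳 => w i j q.1 q.2))
    (Z : Ω → 𝒳) (hZ : Measurable Z)
    (hR : Measurable (exceptMap ξ η k))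
    (hXR : IndepFun Z (exceptMap ξ η k) μ)
    (h4L : ∀ i : Fin n, i < k → Integrable (fun ω => (w i k (η i ω) (Z ω)) ^ 4) μ)
    (h4R : ∀ j : Fin n, k < j → Integrable (fun ω => (w k j (Z ω) (ξ j ω)) ^ 4) μ)
    (hdegL : ∀ i : Fin n, i < k → ∀ a : 𝒳, (∫ ω, w i k a (Z ω) ∂μ) = 0)
    (hdegR : ∀ j : Fin n, k < j → ∀ a : 𝒳, (∫ ω, w k j (Z ω) a ∂μ) = 0)
    (f : ℝ → ℝ) (hf : ContDiff ℝ 3 f) (M₀ M : ℝ) (hf0 : ∀ x, |f x| ≤ M₀)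
    (hf3 : ∀ x, |iteratedDeriv 3 f x| ≤ M) :
    Integrable (fun ω => Fq w k (Z ω) (exceptMap ξ η k ω)) μ ∧
    Integrable (fun ω => (Fq w k (Z ω) (exceptMap ξ η k ω)) ^ 2) μ ∧
    Integrable (fun ω => |Fq w k (Z ω) (exceptMap ξ η k ω)| ^ 3) μ ∧
    (μ[(fun ω => Fq w k (Z ω) (exceptMap ξ η k ω)) |
        MeasurableSpace.comap (exceptMap ξ η k) MeasurableSpace.pi] =ᵐ[μ]
      fun _ => (0 : ℝ)) ∧
    (μ[(fun ω => (Fq w k (Z ω) (exceptMap ξ η k ω)) ^ 2) |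
        MeasurableSpace.comap (exceptMap ξ η k) MeasurableSpace.pi] =ᵐ[μ]
      fun ω => SGq μ w k Z (exceptMap ξ η k ω)) ∧
    (∫ ω, f (s0q w k (exceptMap ξ η k ω) + Fq w k (Z ω) (exceptMap ξ η k ω)) ∂μ =
      ∫ b, (∫ x, f (s0q w k b + Fq w k x b) ∂(μ.map Z)) ∂(μ.map (exceptMap ξ η k))) ∧
    (∫ ω, |Fq w k (Z ω) (exceptMap ξ η k ω)| ^ 3 ∂μ =
      ∫ b, (∫ x, |Fq w k x b| ^ 3 ∂(μ.map Z)) ∂(μ.map (exceptMap ξ η k))) ∧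
    (∀ᵐ b ∂(μ.map (exceptMap ξ η k)),
      |(∫ x, f (s0q w k b + Fq w k x b) ∂(μ.map Z)) -
          (f (s0q w k b) + iteratedDeriv 2 f (s0q w k b) * SGq μ w k Z b / 2)| ≤
        M / 6 * ∫ x, |Fq w k x b| ^ 3 ∂(μ.map Z)) ∧
    Integrable (fun b => ∫ x, f (s0q w k b + Fq w k x b) ∂(μ.map Z))
      (μ.map (exceptMap ξ η k)) ∧
    Integrable (fun b => ∫ x, |Fq w k x b| ^ 3 ∂(μ.map Z)) (μ.map (exceptMap ξ η k)) := by
  classical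
  set R := exceptMap ξ η k with hRdef
  haveI : IsProbabilityMeasure (μ.map Z) := Measure.isProbabilityMeasure_map hZ.aemeasurable
  haveI : IsProbabilityMeasure (μ.map R) := Measure.isProbabilityMeasure_map hR.aemeasurable
  -- term functions on the product space
  set TL : {x // x ∈ Finset.Iio k} → 𝒳 × ({i : Fin n // i ≠ k} → 𝒳) → ℝ :=
    fun i p => w i.1 k (p.2 ⟨i.1, (Finset.mem_Iio.mp i.2).ne⟩) p.1 with hTLdef
  set TR : {x // x ∈ Finset.Ioi k} → 𝒳 × ({i : Fin n // i ≠ k} → 𝒳) → ℝ :=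
    fun j p => w k j.1 p.1 (p.2 ⟨j.1, (Finset.mem_Ioi.mp j.2).ne'⟩) with hTRdef
  have hTLm : ∀ i, Measurable (TL i) := by
    intro i
    have hg : Measurable (fun p : 𝒳 × ({i : Fin n // i ≠ k} → 𝒳) =>
        (p.2 ⟨i.1, (Finset.mem_Iio.mp i.2).ne⟩, p.1)) :=
      Measurable.prodMk (Measurable.comp (measurable_pi_apply _) measurable_snd) measurable_fst
    exact (hw_meas i.1 k).comp hg
  have hTRm : ∀ j, Measurable (TR j) := by
    intro j
    have hg : Measurable (fun p : 𝒳 × ({i : Fin n // i ≠ k} → 𝒳) =>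
        (p.1, p.2 ⟨j.1, (Finset.mem_Ioi.mp j.2).ne'⟩)) :=
      Measurable.prodMk measurable_fst (Measurable.comp (measurable_pi_apply _) measurable_snd)
    exact (hw_meas k j.1).comp hg
  have hFm : Measurable (fun p : 𝒳 × ({i : Fin n // i ≠ k} → 𝒳) => Fq w k p.1 p.2) :=
    Fq_measurable w k hw_meas
  -- pointwise identities for terms along ω
  have hTLω : ∀ i, (fun ω => TL i (Z ω, R ω)) = fun ω => w i.1 k (η i.1 ω) (Z ω) := by
    intro i
    funext ω
    have hik : i.1 < k := Finset.mem_Iio.mp i.2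
    simp only [hTLdef, hRdef, exceptMap, lowerMix, if_pos hik]
  have hTRω : ∀ j, (fun ω => TR j (Z ω, R ω)) = fun ω => w k j.1 (Z ω) (ξ j.1 ω) := by
    intro j
    funext ω
    have hkj : k < j.1 := Finset.mem_Ioi.mp j.2
    simp only [hTRdef, hRdef, exceptMap, lowerMix, if_neg (not_lt.mpr hkj.le)]
  -- fourth moments on the product space
  have hTL4 : ∀ i, Integrable (fun p => TL i p ^ 4) ((μ.map Z).prod (μ.map R)) := by
    intro i
    rw [integrable_pair_iff hZ hR hXR ((hTLm i).pow_const 4).stronglyMeasurable]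
    have : (fun ω => TL i (Z ω, R ω) ^ 4) = fun ω => (w i.1 k (η i.1 ω) (Z ω)) ^ 4 := by
      funext ω
      exact congrArg (· ^ 4) (congrFun (hTLω i) ω)
    rw [this]
    exact h4L i.1 (Finset.mem_Iio.mp i.2)
  have hTR4 : ∀ j, Integrable (fun p => TR j p ^ 4) ((μ.map Z).prod (μ.map R)) := by
    intro j
    rw [integrable_pair_iff hZ hR hXR ((hTRm j).pow_const 4).stronglyMeasurable]
    have : (fun ω => TR j (Z ω, R ω) ^ 4) = fun ω => (w k j.1 (Z ω) (ξ j.1 ω)) ^ 4 := by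
      funext ω
      exact congrArg (· ^ 4) (congrFun (hTRω j) ω)
    rw [this]
    exact h4R j.1 (Finset.mem_Ioi.mp j.2)
  -- decomposition of Fq
  have hFdec : ∀ p : 𝒳 × ({i : Fin n // i ≠ k} → 𝒳),
      Fq w k p.1 p.2 = (∑ i ∈ (Finset.Iio k).attach, TL i p) +
        ∑ j ∈ (Finset.Ioi k).attach, TR j p := fun p => rfl
  -- fourth moment of Fq on the product space
  have hF4 : Integrable (fun p => (Fq w k p.1 p.2) ^ 4) ((μ.map Z).prod (μ.map R)) := by
    have hDom : Integrable (fun p => 8 * ((((Finset.Iio k).attach.card : ℝ)) ^ 3 *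
        (∑ i ∈ (Finset.Iio k).attach, TL i p ^ 4) +
        (((Finset.Ioi k).attach.card : ℝ)) ^ 3 *
        (∑ j ∈ (Finset.Ioi k).attach, TR j p ^ 4))) ((μ.map Z).prod (μ.map R)) := by
      refine Integrable.const_mul ?_ 8
      exact ((integrable_finset_sum _ (fun i _ => hTL4 i)).const_mul _).add
        ((integrable_finset_sum _ (fun j _ => hTR4 j)).const_mul _)
    refine Integrable.mono' hDom ((hFm.pow_const 4).aestronglyMeasurable)
      (Filter.Eventually.of_forall fun p => ?_)
    rw [Real.norm_eq_abs, abs_of_nonneg (by positivity : (0:ℝ) ≤ (Fq w k p.1 p.2) ^ 4), hFdec p]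
    calc ((∑ i ∈ (Finset.Iio k).attach, TL i p) + ∑ j ∈ (Finset.Ioi k).attach, TR j p) ^ 4
        ≤ 8 * ((∑ i ∈ (Finset.Iio k).attach, TL i p) ^ 4 +
          (∑ j ∈ (Finset.Ioi k).attach, TR j p) ^ 4) := add_pow4_le _ _
      _ ≤ 8 * ((((Finset.Iio k).attach.card : ℝ)) ^ 3 *
          (∑ i ∈ (Finset.Iio k).attach, TL i p ^ 4) +
          (((Finset.Ioi k).attach.card : ℝ)) ^ 3 *
          (∑ j ∈ (Finset.Ioi k).attach, TR j p ^ 4)) := by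
          have h1 := pow4_sum_le (Finset.Iio k).attach (fun i => TL i p)
          have h2 := pow4_sum_le (Finset.Ioi k).attach (fun j => TR j p)
          linarith
  have hFν : Integrable (fun p => Fq w k p.1 p.2) ((μ.map Z).prod (μ.map R)) :=
    integrable_self_of_pow4 hFm.aestronglyMeasurable hF4
  have hF2ν : Integrable (fun p => (Fq w k p.1 p.2) ^ 2) ((μ.map Z).prod (μ.map R)) :=
    integrable_sq_of_pow4 hFm.aestronglyMeasurable hF4
  have hF3ν : Integrable (fun p => |Fq w k p.1 p.2| ^ 3) ((μ.map Z).prod (μ.map R)) :=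
    integrable_abs_cube_of_pow4 hFm.aestronglyMeasurable hF4
  have hF2sm : StronglyMeasurable (fun p : 𝒳 × ({i : Fin n // i ≠ k} → 𝒳) =>
      (Fq w k p.1 p.2) ^ 2) := (hFm.pow_const 2).stronglyMeasurable
  have hF3sm : StronglyMeasurable (fun p : 𝒳 × ({i : Fin n // i ≠ k} → 𝒳) =>
      |Fq w k p.1 p.2| ^ 3) := ((hFm.abs).pow_const 3).stronglyMeasurable
  -- transfer to ω versions
  have hC1 : Integrable (fun ω => Fq w k (Z ω) (R ω)) μ :=
    (integrable_pair_iff hZ hR hXR hFm.stronglyMeasurable).mp hFν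
  have hC2 : Integrable (fun ω => (Fq w k (Z ω) (R ω)) ^ 2) μ :=
    (integrable_pair_iff hZ hR hXR hF2sm).mp hF2ν
  have hC3 : Integrable (fun ω => |Fq w k (Z ω) (R ω)| ^ 3) μ :=
    (integrable_pair_iff hZ hR hXR hF3sm).mp hF3ν
  -- sections are integrable a.e.
  have hsecL : ∀ᵐ b ∂(μ.map R), ∀ i, Integrable (fun x => TL i (x, b)) (μ.map Z) :=
    ae_all_iff.mpr fun i => (integrable_self_of_pow4 (hTLm i).aestronglyMeasurable
      (hTL4 i)).prod_left_ae
  have hsecR : ∀ᵐ b ∂(μ.map R), ∀ j, Integrable (fun x => TR j (x, b)) (μ.map Z) :=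
    ae_all_iff.mpr fun j => (integrable_self_of_pow4 (hTRm j).aemeasurable.aestronglyMeasurable
      (hTR4 j)).prod_left_ae
  have hsecLL : ∀ᵐ b ∂(μ.map R), ∀ i i',
      Integrable (fun x => TL i (x, b) * TL i' (x, b)) (μ.map Z) :=
    ae_all_iff.mpr fun i => ae_all_iff.mpr fun i' =>
      (integrable_mul_of_pow4 (hTLm i).aestronglyMeasurable (hTLm i').aestronglyMeasurable
        (hTL4 i) (hTL4 i')).prod_left_ae
  have hsecLR : ∀ᵐ b ∂(μ.map R), ∀ i j,
      Integrable (fun x => TL i (x, b) * TR j (x, b)) (μ.map Z) :=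
    ae_all_iff.mpr fun i => ae_all_iff.mpr fun j =>
      (integrable_mul_of_pow4 (hTLm i).aestronglyMeasurable (hTRm j).aestronglyMeasurable
        (hTL4 i) (hTR4 j)).prod_left_ae
  have hsecRR : ∀ᵐ b ∂(μ.map R), ∀ j j',
      Integrable (fun x => TR j (x, b) * TR j' (x, b)) (μ.map Z) :=
    ae_all_iff.mpr fun j => ae_all_iff.mpr fun j' =>
      (integrable_mul_of_pow4 (hTRm j).aestronglyMeasurable (hTRm j').aestronglyMeasurable
        (hTR4 j) (hTR4 j')).prod_left_ae
  have hsecF : ∀ᵐ b ∂(μ.map R), Integrable (fun x => Fq w k x b) (μ.map Z) :=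
    hFν.prod_left_ae
  have hsecF2 : ∀ᵐ b ∂(μ.map R), Integrable (fun x => (Fq w k x b) ^ 2) (μ.map Z) :=
    hF2ν.prod_left_ae
  have hsecF3 : ∀ᵐ b ∂(μ.map R), Integrable (fun x => |Fq w k x b| ^ 3) (μ.map Z) :=
    hF3ν.prod_left_ae
  -- section integrals of single terms via the law of Z
  have hintTL : ∀ (b : {i : Fin n // i ≠ k} → 𝒳) i,
      ∫ x, TL i (x, b) ∂(μ.map Z) = ∫ ω, w i.1 k (b ⟨i.1, (Finset.mem_Iio.mp i.2).ne⟩) (Z ω) ∂μ := by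
    intro b i
    exact integral_map hZ.aemeasurable
      (((hw_meas i.1 k).comp (Measurable.prodMk measurable_const measurable_id)).aestronglyMeasurable)
  have hintTR : ∀ (b : {i : Fin n // i ≠ k} → 𝒳) j,
      ∫ x, TR j (x, b) ∂(μ.map Z) = ∫ ω, w k j.1 (Z ω) (b ⟨j.1, (Finset.mem_Ioi.mp j.2).ne'⟩) ∂μ := by
    intro b j
    exact integral_map hZ.aemeasurable
      (((hw_meas k j.1).comp (Measurable.prodMk measurable_id measurable_const)).aestronglyMeasurable)
  -- a.e. vanishing of first conditional moment
  have hzero : ∀ᵐ b ∂(μ.map R), ∫ x, Fq w k x b ∂(μ.map Z) = 0 := by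
    filter_upwards [hsecL, hsecR] with b hbL hbR
    have : (fun x => Fq w k x b) = fun x =>
        (∑ i ∈ (Finset.Iio k).attach, TL i (x, b)) + ∑ j ∈ (Finset.Ioi k).attach, TR j (x, b) :=
      rfl
    rw [this, integral_add (integrable_finset_sum _ fun i _ => hbL i)
        (integrable_finset_sum _ fun j _ => hbR j),
      integral_finset_sum _ (fun i _ => hbL i), integral_finset_sum _ (fun j _ => hbR j)]
    have z1 : ∀ i ∈ (Finset.Iio k).attach, ∫ x, TL i (x, b) ∂(μ.map Z) = 0 := by
      intro i _
      rw [hintTL b i]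
      exact hdegL i.1 (Finset.mem_Iio.mp i.2) _
    have z2 : ∀ j ∈ (Finset.Ioi k).attach, ∫ x, TR j (x, b) ∂(μ.map Z) = 0 := by
      intro j _
      rw [hintTR b j]
      exact hdegR j.1 (Finset.mem_Ioi.mp j.2) _
    rw [Finset.sum_congr rfl z1, Finset.sum_congr rfl z2]
    simp
  -- a.e. identification of the second conditional moment
  have hQQ : ∀ᵐ b ∂(μ.map R), ∫ x, (Fq w k x b) ^ 2 ∂(μ.map Z) = SGq μ w k Z b := by
    filter_upwards [hsecLL, hsecLR, hsecRR] with b hLL hLR hRR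
    have hexp : (fun x => (Fq w k x b) ^ 2) = fun x =>
        (∑ i ∈ (Finset.Iio k).attach, ∑ i' ∈ (Finset.Iio k).attach, TL i (x, b) * TL i' (x, b)) +
        ((2 : ℝ) * ∑ i ∈ (Finset.Iio k).attach, ∑ j ∈ (Finset.Ioi k).attach,
          TL i (x, b) * TR j (x, b)) +
        ∑ j ∈ (Finset.Ioi k).attach, ∑ j' ∈ (Finset.Ioi k).attach, TR j (x, b) * TR j' (x, b) := by
      funext x
      rw [hFdec (x, b)]
      rw [← Finset.sum_mul_sum, ← Finset.sum_mul_sum, ← Finset.sum_mul_sum]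
      ring
    have iLL : Integrable (fun x => ∑ i ∈ (Finset.Iio k).attach, ∑ i' ∈ (Finset.Iio k).attach,
        TL i (x, b) * TL i' (x, b)) (μ.map Z) :=
      integrable_finset_sum _ fun i _ => integrable_finset_sum _ fun i' _ => hLL i i'
    have iLR : Integrable (fun x => ∑ i ∈ (Finset.Iio k).attach, ∑ j ∈ (Finset.Ioi k).attach,
        TL i (x, b) * TR j (x, b)) (μ.map Z) :=
      integrable_finset_sum _ fun i _ => integrable_finset_sum _ fun j _ => hLR i j
    have iRR : Integrable (fun x => ∑ j ∈ (Finset.Ioi k).attach, ∑ j' ∈ (Finset.Ioi k).attach,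
        TR j (x, b) * TR j' (x, b)) (μ.map Z) :=
      integrable_finset_sum _ fun j _ => integrable_finset_sum _ fun j' _ => hRR j j'
    have iLR2 : Integrable (fun x => (2 : ℝ) * ∑ i ∈ (Finset.Iio k).attach,
        ∑ j ∈ (Finset.Ioi k).attach, TL i (x, b) * TR j (x, b)) (μ.map Z) := iLR.const_mul 2
    have iSum2 : Integrable (fun x => (∑ i ∈ (Finset.Iio k).attach, ∑ i' ∈ (Finset.Iio k).attach,
        TL i (x, b) * TL i' (x, b)) + (2 : ℝ) * ∑ i ∈ (Finset.Iio k).attach,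
        ∑ j ∈ (Finset.Ioi k).attach, TL i (x, b) * TR j (x, b)) (μ.map Z) := by
      exact iLL.add iLR2
    rw [hexp, integral_add iSum2 iRR, integral_add iLL iLR2,
      integral_const_mul, integral_finset_sum _ (fun i _ => integrable_finset_sum _
        fun i' _ => hLL i i'), integral_finset_sum _ (fun i _ => integrable_finset_sum _
        fun j _ => hLR i j), integral_finset_sum _ (fun j _ => integrable_finset_sum _
        fun j' _ => hRR j j')]
    have eLL : ∀ i ∈ (Finset.Iio k).attach, ∫ x, (∑ i' ∈ (Finset.Iio k).attach,
        TL i (x, b) * TL i' (x, b)) ∂(μ.map Z)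
        = ∑ i' ∈ (Finset.Iio k).attach, ∫ ω, w i.1 k (b ⟨i.1, (Finset.mem_Iio.mp i.2).ne⟩) (Z ω) *
            w i'.1 k (b ⟨i'.1, (Finset.mem_Iio.mp i'.2).ne⟩) (Z ω) ∂μ := by
      intro i _
      rw [integral_finset_sum _ (fun i' _ => hLL i i')]
      refine Finset.sum_congr rfl fun i' _ => ?_
      exact integral_map hZ.aemeasurable
        ((((hw_meas i.1 k).comp (Measurable.prodMk measurable_const measurable_id)).mul
          ((hw_meas i'.1 k).comp
            (Measurable.prodMk measurable_const measurable_id))).aestronglyMeasurable)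
    have eLR : ∀ i ∈ (Finset.Iio k).attach, ∫ x, (∑ j ∈ (Finset.Ioi k).attach,
        TL i (x, b) * TR j (x, b)) ∂(μ.map Z)
        = ∑ j ∈ (Finset.Ioi k).attach, ∫ ω, w i.1 k (b ⟨i.1, (Finset.mem_Iio.mp i.2).ne⟩) (Z ω) *
            w k j.1 (Z ω) (b ⟨j.1, (Finset.mem_Ioi.mp j.2).ne'⟩) ∂μ := by
      intro i _
      rw [integral_finset_sum _ (fun j _ => hLR i j)]
      refine Finset.sum_congr rfl fun j _ => ?_
      exact integral_map hZ.aemeasurable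
        ((((hw_meas i.1 k).comp (Measurable.prodMk measurable_const measurable_id)).mul
          ((hw_meas k j.1).comp
            (Measurable.prodMk measurable_id measurable_const))).aestronglyMeasurable)
    have eRR : ∀ j ∈ (Finset.Ioi k).attach, ∫ x, (∑ j' ∈ (Finset.Ioi k).attach,
        TR j (x, b) * TR j' (x, b)) ∂(μ.map Z)
        = ∑ j' ∈ (Finset.Ioi k).attach, ∫ ω, w k j.1 (Z ω) (b ⟨j.1, (Finset.mem_Ioi.mp j.2).ne'⟩) *
            w k j'.1 (Z ω) (b ⟨j'.1, (Finset.mem_Ioi.mp j'.2).ne'⟩) ∂μ := by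
      intro j _
      rw [integral_finset_sum _ (fun j' _ => hRR j j')]
      refine Finset.sum_congr rfl fun j' _ => ?_
      exact integral_map hZ.aemeasurable
        ((((hw_meas k j.1).comp (Measurable.prodMk measurable_id measurable_const)).mul
          ((hw_meas k j'.1).comp
            (Measurable.prodMk measurable_id measurable_const))).aestronglyMeasurable)
    rw [Finset.sum_congr rfl eLL, Finset.sum_congr rfl eLR, Finset.sum_congr rfl eRR]
    rfl
  -- conditional expectations
  have hC4 : μ[(fun ω => Fq w k (Z ω) (R ω)) |
      MeasurableSpace.comap R MeasurableSpace.pi] =ᵐ[μ] fun _ => (0 : ℝ) := by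
    have h1 := condexp_pair hZ hR hXR hFm.stronglyMeasurable hC1
    have h2 : (fun ω => ∫ x, Fq w k x (R ω) ∂(μ.map Z)) =ᵐ[μ] fun _ => (0 : ℝ) :=
      ae_of_ae_map hR.aemeasurable hzero
    exact h1.trans h2
  have hC5 : μ[(fun ω => (Fq w k (Z ω) (R ω)) ^ 2) |
      MeasurableSpace.comap R MeasurableSpace.pi] =ᵐ[μ] fun ω => SGq μ w k Z (R ω) := by
    have h1 := condexp_pair hZ hR hXR hF2sm hC2
    have h2 : (fun ω => ∫ x, (Fq w k x (R ω)) ^ 2 ∂(μ.map Z)) =ᵐ[μ]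
        fun ω => SGq μ w k Z (R ω) := ae_of_ae_map hR.aemeasurable hQQ
    exact h1.trans h2
  -- the composed f-integrand
  have hfsm : StronglyMeasurable (fun p : 𝒳 × ({i : Fin n // i ≠ k} → 𝒳) =>
      f (s0q w k p.2 + Fq w k p.1 p.2)) :=
    (hf.continuous.measurable.comp
      (((s0q_measurable w k hw_meas).comp measurable_snd).add hFm)).stronglyMeasurable
  have hfint : Integrable (fun ω => f (s0q w k (R ω) + Fq w k (Z ω) (R ω))) μ := by
    refine Integrable.mono' (integrable_const M₀)
      ((hfsm.measurable.comp ((hZ.prodMk hR))).aestronglyMeasurable)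
      (Filter.Eventually.of_forall fun ω => ?_)
    rw [Real.norm_eq_abs]
    exact hf0 _
  have hC6 : ∫ ω, f (s0q w k (R ω) + Fq w k (Z ω) (R ω)) ∂μ =
      ∫ b, (∫ x, f (s0q w k b + Fq w k x b) ∂(μ.map Z)) ∂(μ.map R) :=
    integral_pair_eq hZ hR hXR hfsm hfint
  have hC7 : ∫ ω, |Fq w k (Z ω) (R ω)| ^ 3 ∂μ =
      ∫ b, (∫ x, |Fq w k x b| ^ 3 ∂(μ.map Z)) ∂(μ.map R) :=
    integral_pair_eq hZ hR hXR hF3sm hC3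
  -- Taylor estimate, a.e. in b
  have hC8 : ∀ᵐ b ∂(μ.map R),
      |(∫ x, f (s0q w k b + Fq w k x b) ∂(μ.map Z)) -
          (f (s0q w k b) + iteratedDeriv 2 f (s0q w k b) * SGq μ w k Z b / 2)| ≤
        M / 6 * ∫ x, |Fq w k x b| ^ 3 ∂(μ.map Z) := by
    filter_upwards [hsecF, hsecF2, hsecF3, hzero, hQQ] with b hbF hbF2 hbF3 hb0 hbQ
    set sb := s0q w k b with hsb
    have hFxm : Measurable (fun x => Fq w k x b) :=
      hFm.comp (measurable_id.prodMk measurable_const)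
    have hfbint : Integrable (fun x => f (sb + Fq w k x b)) (μ.map Z) := by
      refine Integrable.mono' (integrable_const M₀)
        ((hf.continuous.measurable.comp ((measurable_const.add hFxm))).aestronglyMeasurable)
        (Filter.Eventually.of_forall fun x => ?_)
      rw [Real.norm_eq_abs]
      exact hf0 _
    have i1 : Integrable (fun x => f (sb + Fq w k x b) - f sb) (μ.map Z) := by
      exact hfbint.sub (integrable_const _)
    have i4 : Integrable (fun x => iteratedDeriv 1 f sb * Fq w k x b) (μ.map Z) := by
      exact hbF.const_mul _
    have i2 : Integrable (fun x => f (sb + Fq w k x b) - f sb -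
        iteratedDeriv 1 f sb * Fq w k x b) (μ.map Z) := by
      exact i1.sub i4
    have i3 : Integrable (fun x => iteratedDeriv 2 f sb * (Fq w k x b) ^ 2 / 2) (μ.map Z) := by
      exact (hbF2.const_mul _).div_const 2
    have hRemInt : Integrable (fun x => f (sb + Fq w k x b) - f sb -
        iteratedDeriv 1 f sb * Fq w k x b -
        iteratedDeriv 2 f sb * (Fq w k x b) ^ 2 / 2) (μ.map Z) := by
      exact i2.sub i3
    have hRemEq : ∫ x, (f (sb + Fq w k x b) - f sb - iteratedDeriv 1 f sb * Fq w k x b -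
          iteratedDeriv 2 f sb * (Fq w k x b) ^ 2 / 2) ∂(μ.map Z) =
        (∫ x, f (sb + Fq w k x b) ∂(μ.map Z)) -
          (f sb + iteratedDeriv 2 f sb * SGq μ w k Z b / 2) := by
      rw [integral_sub i2 i3, integral_sub i1 i4,
        integral_sub hfbint (integrable_const _), integral_const]
      have e1 : ∫ x, iteratedDeriv 1 f sb * Fq w k x b ∂(μ.map Z) = 0 := by
        rw [integral_const_mul, hb0, mul_zero]
      have e2 : ∫ x, iteratedDeriv 2 f sb * (Fq w k x b) ^ 2 / 2 ∂(μ.map Z) =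
          iteratedDeriv 2 f sb * SGq μ w k Z b / 2 := by
        rw [integral_div, integral_const_mul, hbQ]
      rw [e1, e2]
      simp [measure_univ]
      ring
    have hbound : |∫ x, (f (sb + Fq w k x b) - f sb - iteratedDeriv 1 f sb * Fq w k x b -
          iteratedDeriv 2 f sb * (Fq w k x b) ^ 2 / 2) ∂(μ.map Z)| ≤
        M / 6 * ∫ x, |Fq w k x b| ^ 3 ∂(μ.map Z) := by
      have h1 := norm_integral_le_integral_norm (μ := μ.map Z)
        (f := fun x => f (sb + Fq w k x b) - f sb - iteratedDeriv 1 f sb * Fq w k x b -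
          iteratedDeriv 2 f sb * (Fq w k x b) ^ 2 / 2)
      simp only [Real.norm_eq_abs] at h1
      have h2 : ∫ x, |f (sb + Fq w k x b) - f sb - iteratedDeriv 1 f sb * Fq w k x b -
          iteratedDeriv 2 f sb * (Fq w k x b) ^ 2 / 2| ∂(μ.map Z) ≤
          ∫ x, M * |Fq w k x b| ^ 3 / 6 ∂(μ.map Z) := by
        refine integral_mono hRemInt.abs (by exact (hbF3.const_mul M).div_const 6) fun x => ?_
        exact taylor3 hf hf3 sb (Fq w k x b)
      have h3 : ∫ x, M * |Fq w k x b| ^ 3 / 6 ∂(μ.map Z) =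
          M / 6 * ∫ x, |Fq w k x b| ^ 3 ∂(μ.map Z) := by
        rw [integral_div, integral_const_mul]
        ring
      linarith
    rw [← hRemEq]
    exact hbound
  -- integrability over b
  have hC9a : Integrable (fun b => ∫ x, f (s0q w k b + Fq w k x b) ∂(μ.map Z)) (μ.map R) := by
    refine Integrable.mono' (integrable_const M₀)
      (hfsm.integral_prod_left'.aestronglyMeasurable)
      (Filter.Eventually.of_forall fun b => ?_)
    have := norm_integral_le_of_norm_le_const
      (μ := μ.map Z) (f := fun x => f (s0q w k b + Fq w k x b)) (C := M₀)
      (Filter.Eventually.of_forall fun x => by rw [Real.norm_eq_abs]; exact hf0 _)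
    simpa [measure_univ] using this
  have hC9b : Integrable (fun b => ∫ x, |Fq w k x b| ^ 3 ∂(μ.map Z)) (μ.map R) :=
    hF3ν.integral_prod_right
  exact ⟨hC1, hC2, hC3, hC4, hC5, hC6, hC7, hC8, hC9a, hC9b⟩

end Side

set_option maxHeartbeats 2000000 in
/-- Lindeberg swapping step for generalized quadratic forms: the first two conditional
moments of `W_k − W_{k,0}` and `W_{k+1} − W_{k,0}` given all coordinates except the `k`-th
coincide, and hence `|E f(W_k) − E f(W_{k+1})|` is bounded by
`(sup|f^{(3)}|/6)(E|W_k − W_{k,0}|³ + E|W_{k+1} − W_{k,0}|³)`. -/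
theorem lindeberg_swap_step
    (μ : Measure Ω) [IsProbabilityMeasure μ]
    [TopologicalSpace 𝒳] [PolishSpace 𝒳] [BorelSpace 𝒳]
    {n : ℕ} (ξ η : Fin n → Ω → 𝒳)
    (hmeasξ : ∀ i, Measurable (ξ i)) (hmeasη : ∀ i, Measurable (η i))
    (hindep : iIndepFun (Sum.elim ξ η) μ)
    (w : Fin n → Fin n → 𝒳 → 𝒳 → ℝ)
    (hw_meas : ∀ i j, Measurable (fun q : 𝒳 × 𝒳 => w i j q.1 q.2))
    (hint4 : ∀ i j, i < j →
      Integrable (fun ω => (w i j (ξ i ω) (ξ j ω)) ^ 4) μ ∧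
      Integrable (fun ω => (w i j (ξ i ω) (η j ω)) ^ 4) μ ∧
      Integrable (fun ω => (w i j (η i ω) (ξ j ω)) ^ 4) μ ∧
      Integrable (fun ω => (w i j (η i ω) (η j ω)) ^ 4) μ)
    (hdeg : ∀ i j, i < j → ∀ a : 𝒳,
      (∫ ω, w i j (ξ i ω) a ∂μ) = 0 ∧ (∫ ω, w i j a (ξ j ω) ∂μ) = 0 ∧
      (∫ ω, w i j (η i ω) a ∂μ) = 0 ∧ (∫ ω, w i j a (η j ω) ∂μ) = 0)
    (hmatch1 : ∀ i j k : Fin n, i ≤ j → j < k → ∀ a b : 𝒳,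
      (∫ ω, w i k a (ξ k ω) * w j k b (ξ k ω) ∂μ) =
        ∫ ω, w i k a (η k ω) * w j k b (η k ω) ∂μ)
    (hmatch2 : ∀ i j k : Fin n, i < j → j < k → ∀ a b : 𝒳,
      (∫ ω, w i j a (ξ j ω) * w j k (ξ j ω) b ∂μ) =
        ∫ ω, w i j a (η j ω) * w j k (η j ω) b ∂μ)
    (hmatch3 : ∀ i j k : Fin n, i < j → j ≤ k → ∀ a b : 𝒳,
      (∫ ω, w i j (ξ i ω) a * w i k (ξ i ω) b ∂μ) =
        ∫ ω, w i j (η i ω) a * w i k (η i ω) b ∂μ)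
    (k : Fin n)
    (f : ℝ → ℝ) (hf : ContDiff ℝ 3 f)
    (M₀ M : ℝ) (hf0 : ∀ x, |f x| ≤ M₀)
    (hf3 : ∀ x, |iteratedDeriv 3 f x| ≤ M) :
    (μ[incrXi w ξ η k | exceptSigma ξ η k] =ᵐ[μ]
        μ[incrEta w ξ η k | exceptSigma ξ η k]) ∧
    (μ[fun ω => (incrXi w ξ η k ω) ^ 2 | exceptSigma ξ η k] =ᵐ[μ]
        μ[fun ω => (incrEta w ξ η k ω) ^ 2 | exceptSigma ξ η k]) ∧
    |(∫ ω, f (Wk0 w ξ η k ω + incrXi w ξ η k ω) ∂μ) -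
        ∫ ω, f (Wk0 w ξ η k ω + incrEta w ξ η k ω) ∂μ| ≤
      M / 6 * ((∫ ω, |incrXi w ξ η k ω| ^ 3 ∂μ) + ∫ ω, |incrEta w ξ η k ω| ^ 3 ∂μ) := by

  classical
  -- basic identifications
  have hmEq : exceptSigma ξ η k =
      MeasurableSpace.comap (exceptMap ξ η k) MeasurableSpace.pi := rfl
  have hRmeas : Measurable (exceptMap ξ η k) := by
    apply measurable_pi_lambda
    intro i
    by_cases h : (i : Fin n) < k
    · simpa [exceptMap, lowerMix, h] using hmeasη i
    · simpa [exceptMap, lowerMix, h] using hmeasξ i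
  have hXiF : incrXi w ξ η k = fun ω => Fq w k (ξ k ω) (exceptMap ξ η k ω) := by
    funext ω
    show (∑ i ∈ Finset.Iio k, w i k (η i ω) (ξ k ω)) +
        ∑ j ∈ Finset.Ioi k, w k j (ξ k ω) (ξ j ω) = _
    unfold Fq
    congr 1
    · rw [← Finset.sum_attach (Finset.Iio k) (fun i => w i k (η i ω) (ξ k ω))]
      refine Finset.sum_congr rfl fun i _ => ?_
      have hik : i.1 < k := Finset.mem_Iio.mp i.2
      simp [exceptMap, lowerMix, hik]
    · rw [← Finset.sum_attach (Finset.Ioi k) (fun j => w k j (ξ k ω) (ξ j ω))]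
      refine Finset.sum_congr rfl fun j _ => ?_
      have hkj : k < j.1 := Finset.mem_Ioi.mp j.2
      simp [exceptMap, lowerMix, not_lt.mpr hkj.le]
  have hEtaF : incrEta w ξ η k = fun ω => Fq w k (η k ω) (exceptMap ξ η k ω) := by
    funext ω
    show (∑ i ∈ Finset.Iio k, w i k (η i ω) (η k ω)) +
        ∑ j ∈ Finset.Ioi k, w k j (η k ω) (ξ j ω) = _
    unfold Fq
    congr 1
    · rw [← Finset.sum_attach (Finset.Iio k) (fun i => w i k (η i ω) (η k ω))]
      refine Finset.sum_congr rfl fun i _ => ?_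
      have hik : i.1 < k := Finset.mem_Iio.mp i.2
      simp [exceptMap, lowerMix, hik]
    · rw [← Finset.sum_attach (Finset.Ioi k) (fun j => w k j (η k ω) (ξ j ω))]
      refine Finset.sum_congr rfl fun j _ => ?_
      have hkj : k < j.1 := Finset.mem_Ioi.mp j.2
      simp [exceptMap, lowerMix, not_lt.mpr hkj.le]
  have hW0 : Wk0 w ξ η k = fun ω => s0q w k (exceptMap ξ η k ω) := by
    funext ω
    unfold Wk0 s0q
    refine Finset.sum_congr rfl fun i _ => Finset.sum_congr rfl fun j _ => ?_
    by_cases h : i ≠ k ∧ j ≠ k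
    · simp only [if_pos h, dif_pos h]
      simp [exceptMap]
    · simp only [if_neg h, dif_neg h]
  -- independence of the k-th coordinates from the rest
  have hmeasSum : ∀ s : Fin n ⊕ Fin n, Measurable (Sum.elim ξ η s) := by
    rintro (i | i)
    · exact hmeasξ i
    · exact hmeasη i
  have key : ∀ σ : Fin n ⊕ Fin n, (σ = Sum.inl k ∨ σ = Sum.inr k) →
      IndepFun (Sum.elim ξ η σ) (exceptMap ξ η k) μ := by
    intro σ hσ
    set T : Finset (Fin n ⊕ Fin n) :=
      Finset.univ.filter (fun t => t ≠ Sum.inl k ∧ t ≠ Sum.inr k) with hT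
    have hdisj : Disjoint ({σ} : Finset (Fin n ⊕ Fin n)) T := by
      rw [Finset.disjoint_left]
      intro a ha haT
      rw [Finset.mem_singleton] at ha
      rw [hT, Finset.mem_filter] at haT
      subst ha
      rcases hσ with h | h
      · exact haT.2.1 h
      · exact haT.2.2 h
    have h0 := hindep.indepFun_finset {σ} T hdisj hmeasSum
    have hcode : ∀ i : {i : Fin n // i ≠ k},
        (if (i : Fin n) < k then Sum.inr i.1 else Sum.inl i.1) ∈ T := by
      intro i
      rw [hT, Finset.mem_filter]
      refine ⟨Finset.mem_univ _, ?_, ?_⟩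
      · by_cases h : (i : Fin n) < k <;> simp [h, i.2]
      · by_cases h : (i : Fin n) < k <;> simp [h, i.2]
    let φS : ({x // x ∈ ({σ} : Finset (Fin n ⊕ Fin n))} → 𝒳) → 𝒳 :=
      fun g => g ⟨σ, Finset.mem_singleton_self σ⟩
    let φT : ({x // x ∈ T} → 𝒳) → ({i : Fin n // i ≠ k} → 𝒳) :=
      fun g i => g ⟨if (i : Fin n) < k then Sum.inr i.1 else Sum.inl i.1, hcode i⟩
    have hφS : Measurable φS := measurable_pi_apply _
    have hφT : Measurable φT := measurable_pi_lambda _ fun i => measurable_pi_apply _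
    have h1 := h0.comp hφS hφT
    have e1 : (φS ∘ fun a (i : {x // x ∈ ({σ} : Finset (Fin n ⊕ Fin n))}) =>
        Sum.elim ξ η i.1 a) = Sum.elim ξ η σ := rfl
    have e2 : (φT ∘ fun a (i : {x // x ∈ T}) => Sum.elim ξ η i.1 a) = exceptMap ξ η k := by
      funext ω
      funext i
      show Sum.elim ξ η (if (i : Fin n) < k then Sum.inr i.1 else Sum.inl i.1) ω =
        lowerMix ξ η k i.1 ω
      by_cases h : (i : Fin n) < k
      · simp [h, lowerMix]
      · simp [h, lowerMix]
    rw [e1, e2] at h1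
    exact h1
  have hIξ : IndepFun (ξ k) (exceptMap ξ η k) μ := key (Sum.inl k) (Or.inl rfl)
  have hIη : IndepFun (η k) (exceptMap ξ η k) μ := key (Sum.inr k) (Or.inr rfl)
  -- second-moment matching
  have hSG : ∀ b, SGq μ w k (ξ k) b = SGq μ w k (η k) b := by
    intro b
    unfold SGq
    congr 1
    · congr 1
      · refine Finset.sum_congr rfl fun i _ => Finset.sum_congr rfl fun i' _ => ?_
        rcases le_total i.1 i'.1 with h | h
        · exact hmatch1 i.1 i'.1 k h (Finset.mem_Iio.mp i'.2) _ _
        · calc ∫ ω, w i.1 k (b ⟨i.1, (Finset.mem_Iio.mp i.2).ne⟩) (ξ k ω) *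
                w i'.1 k (b ⟨i'.1, (Finset.mem_Iio.mp i'.2).ne⟩) (ξ k ω) ∂μ
              = ∫ ω, w i'.1 k (b ⟨i'.1, (Finset.mem_Iio.mp i'.2).ne⟩) (ξ k ω) *
                w i.1 k (b ⟨i.1, (Finset.mem_Iio.mp i.2).ne⟩) (ξ k ω) ∂μ :=
              integral_congr_ae (Filter.Eventually.of_forall fun ω => mul_comm _ _)
            _ = ∫ ω, w i'.1 k (b ⟨i'.1, (Finset.mem_Iio.mp i'.2).ne⟩) (η k ω) *
                w i.1 k (b ⟨i.1, (Finset.mem_Iio.mp i.2).ne⟩) (η k ω) ∂μ :=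
              hmatch1 i'.1 i.1 k h (Finset.mem_Iio.mp i.2) _ _
            _ = ∫ ω, w i.1 k (b ⟨i.1, (Finset.mem_Iio.mp i.2).ne⟩) (η k ω) *
                w i'.1 k (b ⟨i'.1, (Finset.mem_Iio.mp i'.2).ne⟩) (η k ω) ∂μ :=
              integral_congr_ae (Filter.Eventually.of_forall fun ω => mul_comm _ _)
      · congr 1
        refine Finset.sum_congr rfl fun i _ => Finset.sum_congr rfl fun j _ => ?_
        exact hmatch2 i.1 k j.1 (Finset.mem_Iio.mp i.2) (Finset.mem_Ioi.mp j.2) _ _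
    · refine Finset.sum_congr rfl fun j _ => Finset.sum_congr rfl fun j' _ => ?_
      rcases le_total j.1 j'.1 with h | h
      · exact hmatch3 k j.1 j'.1 (Finset.mem_Ioi.mp j.2) h _ _
      · calc ∫ ω, w k j.1 (ξ k ω) (b ⟨j.1, (Finset.mem_Ioi.mp j.2).ne'⟩) *
              w k j'.1 (ξ k ω) (b ⟨j'.1, (Finset.mem_Ioi.mp j'.2).ne'⟩) ∂μ
            = ∫ ω, w k j'.1 (ξ k ω) (b ⟨j'.1, (Finset.mem_Ioi.mp j'.2).ne'⟩) *
              w k j.1 (ξ k ω) (b ⟨j.1, (Finset.mem_Ioi.mp j.2).ne'⟩) ∂μ :=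
            integral_congr_ae (Filter.Eventually.of_forall fun ω => mul_comm _ _)
          _ = ∫ ω, w k j'.1 (η k ω) (b ⟨j'.1, (Finset.mem_Ioi.mp j'.2).ne'⟩) *
              w k j.1 (η k ω) (b ⟨j.1, (Finset.mem_Ioi.mp j.2).ne'⟩) ∂μ :=
            hmatch3 k j'.1 j.1 (Finset.mem_Ioi.mp j'.2) h _ _
          _ = ∫ ω, w k j.1 (η k ω) (b ⟨j.1, (Finset.mem_Ioi.mp j.2).ne'⟩) *
              w k j'.1 (η k ω) (b ⟨j'.1, (Finset.mem_Ioi.mp j'.2).ne'⟩) ∂μ :=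
            integral_congr_ae (Filter.Eventually.of_forall fun ω => mul_comm _ _)
  -- apply the one-sided analysis to both sides
  obtain ⟨X1, X2, X3, X4, X5, X6, X7, X8, X9a, X9b⟩ :=
    sideAnalysis μ ξ η k w hw_meas (ξ k) (hmeasξ k) hRmeas hIξ
      (fun i hik => (hint4 i k hik).2.2.1) (fun j hkj => (hint4 k j hkj).1)
      (fun i hik a => (hdeg i k hik a).2.1) (fun j hkj a => (hdeg k j hkj a).1)
      f hf M₀ M hf0 hf3
  obtain ⟨Y1, Y2, Y3, Y4, Y5, Y6, Y7, Y8, Y9a, Y9b⟩ :=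
    sideAnalysis μ ξ η k w hw_meas (η k) (hmeasη k) hRmeas hIη
      (fun i hik => (hint4 i k hik).2.2.2) (fun j hkj => (hint4 k j hkj).2.2.1)
      (fun i hik a => (hdeg i k hik a).2.2.2) (fun j hkj a => (hdeg k j hkj a).2.2.1)
      f hf M₀ M hf0 hf3
  haveI : IsProbabilityMeasure (μ.map (exceptMap ξ η k)) :=
    Measure.isProbabilityMeasure_map hRmeas.aemeasurable
  refine ⟨?_, ?_, ?_⟩
  · -- first conditional moments
    rw [hmEq, hXiF, hEtaF]
    exact X4.trans Y4.symm
  · -- second conditional moments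
    rw [hmEq]
    simp only [hXiF, hEtaF]
    refine X5.trans ?_
    have eSG : (fun ω => SGq μ w k (ξ k) (exceptMap ξ η k ω)) =
        fun ω => SGq μ w k (η k) (exceptMap ξ η k ω) := funext fun ω => hSG _
    rw [eSG]
    exact Y5.symm
  · -- the Lindeberg bound
    have hM : 0 ≤ M := le_trans (abs_nonneg _) (hf3 0)
    have g1 : (∫ ω, f (Wk0 w ξ η k ω + incrXi w ξ η k ω) ∂μ) =
        ∫ b, (∫ x, f (s0q w k b + Fq w k x b) ∂(μ.map (ξ k)))
          ∂(μ.map (exceptMap ξ η k)) := by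
      rw [← X6]
      simp only [hW0, hXiF]
    have g2 : (∫ ω, f (Wk0 w ξ η k ω + incrEta w ξ η k ω) ∂μ) =
        ∫ b, (∫ x, f (s0q w k b + Fq w k x b) ∂(μ.map (η k)))
          ∂(μ.map (exceptMap ξ η k)) := by
      rw [← Y6]
      simp only [hW0, hEtaF]
    have g3 : (∫ ω, |incrXi w ξ η k ω| ^ 3 ∂μ) =
        ∫ b, (∫ x, |Fq w k x b| ^ 3 ∂(μ.map (ξ k))) ∂(μ.map (exceptMap ξ η k)) := by
      rw [← X7]
      simp only [hXiF]
    have g4 : (∫ ω, |incrEta w ξ η k ω| ^ 3 ∂μ) =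
        ∫ b, (∫ x, |Fq w k x b| ^ 3 ∂(μ.map (η k))) ∂(μ.map (exceptMap ξ η k)) := by
      rw [← Y7]
      simp only [hEtaF]
    rw [g1, g2, g3, g4]
    set μR := μ.map (exceptMap ξ η k)
    set Aξ : ({i : Fin n // i ≠ k} → 𝒳) → ℝ :=
      fun b => ∫ x, f (s0q w k b + Fq w k x b) ∂(μ.map (ξ k)) with hAξ
    set Aη : ({i : Fin n // i ≠ k} → 𝒳) → ℝ :=
      fun b => ∫ x, f (s0q w k b + Fq w k x b) ∂(μ.map (η k)) with hAη
    set Bξ : ({i : Fin n // i ≠ k} → 𝒳) → ℝ :=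
      fun b => ∫ x, |Fq w k x b| ^ 3 ∂(μ.map (ξ k)) with hBξ
    set Bη : ({i : Fin n // i ≠ k} → 𝒳) → ℝ :=
      fun b => ∫ x, |Fq w k x b| ^ 3 ∂(μ.map (η k)) with hBη
    have hBξ0 : ∀ b, 0 ≤ Bξ b := fun b => integral_nonneg fun x => by positivity
    have hBη0 : ∀ b, 0 ≤ Bη b := fun b => integral_nonneg fun x => by positivity
    have hae : ∀ᵐ b ∂μR, |Aξ b - Aη b| ≤ M / 6 * Bξ b + M / 6 * Bη b := by
      filter_upwards [X8, Y8] with b h8x h8y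
      have hmid := hSG b
      set mid := f (s0q w k b) + iteratedDeriv 2 f (s0q w k b) * SGq μ w k (ξ k) b / 2 with hmd
      have h8y' : |Aη b - mid| ≤ M / 6 * Bη b := by
        rw [hmd, hmid]
        exact h8y
      have htri : |Aξ b - Aη b| ≤ |Aξ b - mid| + |Aη b - mid| := by
        have := abs_sub_le (Aξ b) mid (Aη b)
        rw [abs_sub_comm mid (Aη b)] at this
        exact this
      have h8x' : |Aξ b - mid| ≤ M / 6 * Bξ b := h8x
      linarith
    have hsub : Integrable (fun b => Aξ b - Aη b) μR := X9a.sub Y9a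
    have h1 : |∫ b, Aξ b ∂μR - ∫ b, Aη b ∂μR| = |∫ b, (Aξ b - Aη b) ∂μR| := by
      rw [integral_sub X9a Y9a]
    have h2 : |∫ b, (Aξ b - Aη b) ∂μR| ≤ ∫ b, |Aξ b - Aη b| ∂μR := by
      have := norm_integral_le_integral_norm (μ := μR) (f := fun b => Aξ b - Aη b)
      simpa [Real.norm_eq_abs] using this
    have h3 : ∫ b, |Aξ b - Aη b| ∂μR ≤ ∫ b, (M / 6 * Bξ b + M / 6 * Bη b) ∂μR := by
      refine integral_mono_ae hsub.abs ?_ hae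
      exact (X9b.const_mul _).add (Y9b.const_mul _)
    have h4 : ∫ b, (M / 6 * Bξ b + M / 6 * Bη b) ∂μR =
        M / 6 * ((∫ b, Bξ b ∂μR) + ∫ b, Bη b ∂μR) := by
      rw [integral_add (X9b.const_mul _) (Y9b.const_mul _), integral_const_mul,
        integral_const_mul]
      ring
    calc |∫ b, Aξ b ∂μR - ∫ b, Aη b ∂μR| = |∫ b, (Aξ b - Aη b) ∂μR| := h1
      _ ≤ ∫ b, |Aξ b - Aη b| ∂μR := h2
      _ ≤ ∫ b, (M / 6 * Bξ b + M / 6 * Bη b) ∂μR := h3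
      _ = M / 6 * ((∫ b, Bξ b ∂μR) + ∫ b, Bη b ∂μR) := h4
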